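/- Let (M, τ) be a semifinite von Neumann algebra with martingale filtration (M_j) and conditional expectations E_j, let f ∈ L₁(M)₊ and λ > 0, and let (q_j) be the Cuculescu projections with p_j = q_{j−1} − q_j. Define the diagonal bad parts b_{d,j} = p_j(f − E_j f)p_j. Then E_j(b_{d,j}) = 0 for each j, and ∑_j ‖b_{d,j}‖₁ ≤ 2‖f‖₁. -/

import Mathlib

open Matrix
open scoped ComplexOrder

/-- The trace norm `‖A‖₁ = tr √(AᴴA)` of a complex matrix. -/
noncomputable def traceNorm {m : ℕ} (A : Matrix (Fin m) (Fin m) ℂ) : ℝ :=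
  (((Matrix.posSemidef_conjTranspose_mul_self A).1.eigenvectorUnitary : Matrix (Fin m) (Fin m) ℂ) *
    diagonal (((↑) : ℝ → ℂ) ∘ (√·) ∘ (Matrix.posSemidef_conjTranspose_mul_self A).1.eigenvalues) *
    (star (Matrix.posSemidef_conjTranspose_mul_self A).1.eigenvectorUnitary :
      Matrix (Fin m) (Fin m) ℂ)).trace.re

open scoped MatrixOrder

lemma traceNorm_eq_sqrt {m : ℕ} (A : Matrix (Fin m) (Fin m) ℂ) :
    traceNorm A = (CFC.sqrt (Aᴴ * A)).trace.re := by
  rw [CFC.sqrt_eq_real_sqrt _ (Matrix.posSemidef_conjTranspose_mul_self A).nonneg, cfcₙ_eq_cfc,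
    (Matrix.posSemidef_conjTranspose_mul_self A).1.cfc_eq, IsHermitian.cfc,
    Unitary.conjStarAlgAut_apply, traceNorm]
  rfl

lemma my_entry_nonneg {m : ℕ} {A : Matrix (Fin m) (Fin m) ℂ} (hA : A.PosSemidef) (i : Fin m) :
    0 ≤ (A i i).re := by
  have h : 0 ≤ A i i := hA.diag_nonneg
  exact (Complex.le_def.mp h).1

lemma my_trace_re_nonneg {m : ℕ} {A : Matrix (Fin m) (Fin m) ℂ} (hA : A.PosSemidef) :
    0 ≤ A.trace.re := by
  rw [Matrix.trace, Complex.re_sum]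
  exact Finset.sum_nonneg fun i _ => my_entry_nonneg hA i

lemma traceNorm_of_posSemidef {m : ℕ} {A : Matrix (Fin m) (Fin m) ℂ} (hA : A.PosSemidef) :
    traceNorm A = A.trace.re := by
  have hsq : A ^ 2 = Aᴴ * A := by rw [hA.1.eq, pow_two]
  have h : CFC.sqrt (Aᴴ * A) = A := CFC.sqrt_unique (by rw [hA.1.eq]) hA.nonneg
  rw [traceNorm_eq_sqrt, h]

lemma traceNorm_hermitian {m : ℕ} {A : Matrix (Fin m) (Fin m) ℂ} (hA : A.IsHermitian) :
    traceNorm A = ∑ i, |hA.eigenvalues i| := by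
  obtain ⟨U, hUU, hUU', hspec⟩ : ∃ U : Matrix (Fin m) (Fin m) ℂ, star U * U = 1 ∧
      U * star U = 1 ∧ A = U * Matrix.diagonal (RCLike.ofReal ∘ hA.eigenvalues) * star U :=
    ⟨hA.eigenvectorUnitary, Matrix.mem_unitaryGroup_iff'.mp hA.eigenvectorUnitary.2,
      Matrix.mem_unitaryGroup_iff.mp hA.eigenvectorUnitary.2,
      by have h := hA.spectral_theorem; rwa [Unitary.conjStarAlgAut_apply] at h⟩
  set D : Matrix (Fin m) (Fin m) ℂ :=
    Matrix.diagonal (fun i => Complex.ofReal |hA.eigenvalues i|) with hD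
  set D0 : Matrix (Fin m) (Fin m) ℂ := Matrix.diagonal (RCLike.ofReal ∘ hA.eigenvalues) with hD0
  have hDpsd : D.PosSemidef := Matrix.posSemidef_diagonal_iff.mpr fun i =>
    Complex.zero_le_real.mpr (abs_nonneg _)
  have hSpsd : (U * D * star U).PosSemidef := by
    have h := hDpsd.mul_mul_conjTranspose_same U
    simpa [Matrix.star_eq_conjTranspose] using h
  have hfun : (fun i => Complex.ofReal |hA.eigenvalues i| * Complex.ofReal |hA.eigenvalues i|)
      = fun i => (RCLike.ofReal ∘ hA.eigenvalues : Fin m → ℂ) i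
        * (RCLike.ofReal ∘ hA.eigenvalues : Fin m → ℂ) i := by
    funext i
    show Complex.ofReal |hA.eigenvalues i| * Complex.ofReal |hA.eigenvalues i|
        = Complex.ofReal (hA.eigenvalues i) * Complex.ofReal (hA.eigenvalues i)
    rw [← Complex.ofReal_mul, ← Complex.ofReal_mul, abs_mul_abs_self]
  have hDD : D * D = D0 * D0 := by
    rw [hD, hD0, Matrix.diagonal_mul_diagonal, Matrix.diagonal_mul_diagonal, hfun]
  have hSsq : (U * D * star U) ^ 2 = Aᴴ * A := by
    rw [hA.eq, pow_two]
    calc U * D * star U * (U * D * star U) = U * (D * (star U * U) * D) * star U := by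
          noncomm_ring
      _ = U * (D * D) * star U := by rw [hUU]; noncomm_ring
      _ = U * (D0 * D0) * star U := by rw [hDD]
      _ = (U * D0 * star U) * (U * D0 * star U) := by
          rw [show (U * D0 * star U) * (U * D0 * star U)
              = U * (D0 * (star U * U) * D0) * star U from by noncomm_ring, hUU]
          noncomm_ring
      _ = A * A := by rw [← hspec]
  have hsqrt : U * D * star U = CFC.sqrt (Aᴴ * A) :=
    (CFC.sqrt_unique (by rw [← pow_two]; exact hSsq) hSpsd.nonneg).symm
  rw [traceNorm_eq_sqrt, ← hsqrt]
  rw [Matrix.trace_mul_cycle, hUU, Matrix.one_mul, Matrix.trace_diagonal, Complex.re_sum]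
  simp

lemma traceNorm_sub_le {m : ℕ} {X Y : Matrix (Fin m) (Fin m) ℂ}
    (hX : X.PosSemidef) (hY : Y.PosSemidef) :
    traceNorm (X - Y) ≤ X.trace.re + Y.trace.re := by
  have hA : (X - Y).IsHermitian := hX.1.sub hY.1
  rw [traceNorm_hermitian hA]
  obtain ⟨U, hUU, hUU', hdiag⟩ : ∃ U : Matrix (Fin m) (Fin m) ℂ, star U * U = 1 ∧
      U * star U = 1 ∧
      star U * (X - Y) * U = Matrix.diagonal (RCLike.ofReal ∘ hA.eigenvalues) :=
    ⟨hA.eigenvectorUnitary, Matrix.mem_unitaryGroup_iff'.mp hA.eigenvectorUnitary.2,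
      Matrix.mem_unitaryGroup_iff.mp hA.eigenvectorUnitary.2,
        by have h := hA.conjStarAlgAut_star_eigenvectorUnitary
           rwa [Unitary.conjStarAlgAut_star_apply] at h⟩
  have hXU : (star U * X * U).PosSemidef := by
    have h := hX.conjTranspose_mul_mul_same U
    simpa [Matrix.star_eq_conjTranspose] using h
  have hYU : (star U * Y * U).PosSemidef := by
    have h := hY.conjTranspose_mul_mul_same U
    simpa [Matrix.star_eq_conjTranspose] using h
  have hline : ∀ i, hA.eigenvalues i
      = ((star U * X * U) i i).re - ((star U * Y * U) i i).re := by
    intro i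
    have h1 : (star U * (X - Y) * U) i i
        = (Matrix.diagonal (RCLike.ofReal ∘ hA.eigenvalues)) i i := by rw [hdiag]
    have h2 : star U * (X - Y) * U = star U * X * U - star U * Y * U := by noncomm_ring
    rw [h2] at h1
    simp only [Matrix.sub_apply, Matrix.diagonal_apply_eq, Function.comp_apply] at h1
    have := congrArg Complex.re h1
    simpa [Complex.sub_re] using this.symm
  have key : ∀ i, |hA.eigenvalues i|
      ≤ ((star U * X * U) i i).re + ((star U * Y * U) i i).re := by
    intro i
    have hx := my_entry_nonneg hXU i
    have hy := my_entry_nonneg hYU i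
    rw [hline i, abs_le]
    constructor <;> linarith
  have htrX : (star U * X * U).trace = X.trace := by
    rw [Matrix.trace_mul_cycle, hUU', Matrix.one_mul]
  have htrY : (star U * Y * U).trace = Y.trace := by
    rw [Matrix.trace_mul_cycle, hUU', Matrix.one_mul]
  calc ∑ i, |hA.eigenvalues i|
      ≤ ∑ i, (((star U * X * U) i i).re + ((star U * Y * U) i i).re) :=
        Finset.sum_le_sum fun i _ => key i
    _ = (star U * X * U).trace.re + (star U * Y * U).trace.re := by
        rw [Finset.sum_add_distrib, Matrix.trace, Matrix.trace, Complex.re_sum, Complex.re_sum]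
        rfl
    _ = X.trace.re + Y.trace.re := by rw [htrX, htrY]

/-- Cuculescu construction (matrix-valued setting): given a filtration of conditional
expectations `E j`, a positive `f` and `λ > 0`, with Cuculescu projections `q j`
(decreasing, `q j ∈ M_j`, `q_j E_j(f) q_j ≤ λ q_j`, `q_j` commuting with
`q_{j-1} E_j(f) q_{j-1}`) and `p_j = q_{j-1} - q_j`, the diagonal bad parts
`b_{d,j} = p_j (f - E_j f) p_j` satisfy `E_j(b_{d,j}) = 0` and `∑_j ‖b_{d,j}‖₁ ≤ 2‖f‖₁`. -/
theorem cz_diagonal_bad_parts {m : ℕ}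
    (E : ℕ → Matrix (Fin m) (Fin m) ℂ →ₗ[ℂ] Matrix (Fin m) (Fin m) ℂ)
    (hidem : ∀ j, (E j).comp (E j) = E j)
    (htower : ∀ j k, (E j).comp (E k) = E (min j k))
    (hpos : ∀ j x, x.PosSemidef → (E j x).PosSemidef)
    (htr : ∀ j x, (E j x).trace = x.trace)
    (hbimod : ∀ j (a b x : Matrix (Fin m) (Fin m) ℂ),
        E j a = a → E j b = b → E j (a * x * b) = a * E j x * b)
    (f : Matrix (Fin m) (Fin m) ℂ) (hf : f.PosSemidef)
    (lam : ℝ) (hlam : 0 < lam)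
    (q : ℕ → Matrix (Fin m) (Fin m) ℂ)
    (hq0 : q 0 = 1)
    (hqmem : ∀ j, E j (q j) = q j)
    (hqproj : ∀ j, (q j)ᴴ = q j ∧ q j * q j = q j)
    (hqdec : ∀ j, q (j + 1) * q j = q (j + 1) ∧ q j * q (j + 1) = q (j + 1))
    (hqlevel : ∀ j, ((lam : ℂ) • q j - q j * E j f * q j).PosSemidef)
    (hqcomm : ∀ j,
        q (j + 1) * (q j * E (j + 1) f * q j) = (q j * E (j + 1) f * q j) * q (j + 1)) :
    (∀ j : ℕ,
        E (j + 1) ((q j - q (j + 1)) * (f - E (j + 1) f) * (q j - q (j + 1))) = 0) ∧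
      ∀ N : ℕ,
        ∑ j ∈ Finset.range N,
            traceNorm ((q j - q (j + 1)) * (f - E (j + 1) f) * (q j - q (j + 1)))
          ≤ 2 * traceNorm f := by
  -- p j is fixed by E (j+1)
  have hpfix : ∀ j, E (j + 1) (q j - q (j + 1)) = q j - q (j + 1) := by
    intro j
    have h1 : E (j + 1) (q j) = q j := by
      have : E (j + 1) (E j (q j)) = E (min (j + 1) j) (q j) := by
        rw [← LinearMap.comp_apply, htower]
      rw [hqmem] at this
      rwa [min_eq_right (Nat.le_succ j), hqmem] at this
    rw [map_sub, h1, hqmem]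
  have hEE : ∀ j (x : Matrix (Fin m) (Fin m) ℂ), E j (E j x) = E j x := by
    intro j x
    rw [← LinearMap.comp_apply, hidem]
  have part1 : ∀ j : ℕ,
      E (j + 1) ((q j - q (j + 1)) * (f - E (j + 1) f) * (q j - q (j + 1))) = 0 := by
    intro j
    rw [hbimod _ _ _ _ (hpfix j) (hpfix j), map_sub, hEE]
    simp
  refine ⟨part1, ?_⟩
  intro N
  set p : ℕ → Matrix (Fin m) (Fin m) ℂ := fun j => q j - q (j + 1) with hp
  have hpherm : ∀ j, (p j)ᴴ = p j := by
    intro j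
    simp [hp, Matrix.conjTranspose_sub, (hqproj j).1, (hqproj (j + 1)).1]
  have hpp : ∀ j, p j * p j = p j := by
    intro j
    simp only [hp, Matrix.sub_mul, Matrix.mul_sub]
    rw [(hqproj j).2, (hqproj (j + 1)).2, (hqdec j).1, (hqdec j).2]
    abel
  -- bound each term
  have hbound : ∀ j, traceNorm (p j * (f - E (j + 1) f) * p j)
      ≤ 2 * ((q j * f).trace.re - (q (j + 1) * f).trace.re) := by
    intro j
    have hXpsd : (p j * f * p j).PosSemidef := by
      have h := hf.mul_mul_conjTranspose_same (p j)
      rwa [hpherm j] at h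
    have hYpsd : (p j * E (j + 1) f * p j).PosSemidef := by
      have h := (hpos (j + 1) f hf).mul_mul_conjTranspose_same (p j)
      rwa [hpherm j] at h
    have hsplit : p j * (f - E (j + 1) f) * p j
        = p j * f * p j - p j * E (j + 1) f * p j := by noncomm_ring
    have h1 := traceNorm_sub_le hXpsd hYpsd
    rw [hsplit]
    -- trace of Y equals trace of X
    have htrY : (p j * E (j + 1) f * p j).trace = (p j * f * p j).trace := by
      rw [← hbimod (j + 1) (p j) (p j) f (hpfix j) (hpfix j), htr]
    have htrX : (p j * f * p j).trace = (q j * f).trace - (q (j + 1) * f).trace := by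
      rw [Matrix.trace_mul_cycle, hpp j]
      have : p j * f = q j * f - q (j + 1) * f := by rw [hp]; noncomm_ring
      rw [this, Matrix.trace_sub]
    calc traceNorm (p j * f * p j - p j * E (j + 1) f * p j)
        ≤ (p j * f * p j).trace.re + (p j * E (j + 1) f * p j).trace.re := h1
      _ = 2 * ((q j * f).trace.re - (q (j + 1) * f).trace.re) := by
          rw [htrY, htrX]
          simp [Complex.sub_re]
          ring
  calc ∑ j ∈ Finset.range N, traceNorm ((q j - q (j + 1)) * (f - E (j + 1) f) * (q j - q (j + 1)))
      ≤ ∑ j ∈ Finset.range N, 2 * ((q j * f).trace.re - (q (j + 1) * f).trace.re) :=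
        Finset.sum_le_sum fun j _ => hbound j
    _ = 2 * ((q 0 * f).trace.re - (q N * f).trace.re) := by
        rw [← Finset.mul_sum, Finset.sum_range_sub']
    _ ≤ 2 * traceNorm f := by
        have h0 : (q 0 * f).trace.re = f.trace.re := by rw [hq0, Matrix.one_mul]
        have hN : 0 ≤ (q N * f).trace.re := by
          have hpsd : (q N * f * q N).PosSemidef := by
            have h := hf.mul_mul_conjTranspose_same (q N)
            rwa [(hqproj N).1] at h
          have : (q N * f * q N).trace = (q N * f).trace := by
            rw [Matrix.trace_mul_cycle, (hqproj N).2]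
          rw [← this]
          exact my_trace_re_nonneg hpsd
        rw [traceNorm_of_posSemidef hf]
        nlinarith
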